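/- Let k > 1 and let f : ℝ → ℝ be a positive, continuously differentiable function with f(0) < k. Suppose there is no R ∈ (0, (k−1)/k) with f(R) = (k−1)/((k−1)/k − R) (i.e., the system has no endemic equilibrium). Then for every pair of differentiable functions I, R : ℝ → ℝ satisfying, for all t ≥ 0, I'(t) = I(t)·(f(R(t))·(1 − I(t) − R(t)) − k) and R'(t) = (k−1)·I(t) − R(t), with I(0) ≥ 0, R(0) ≥ 0 and I(0) + R(0) ≤ 1, one has (I(t), R(t)) → (0, 0) as t → ∞. -/

import Mathlib

open Filter Real Set intervalIntegral

private lemma sir_ftc {g : ℝ → ℝ} (hg : Continuous g) (b : ℝ) :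
    HasDerivAt (fun u => ∫ x in (0:ℝ)..u, g x) (g b) b :=
  intervalIntegral.integral_hasDerivAt_right (hg.intervalIntegrable _ _)
    (hg.stronglyMeasurableAtFilter _ _) hg.continuousAt

/-- Comparison lemma: if `x' ≤ a x` on `[0,∞)` then `x t ≤ x 0 * exp (∫ a)`. -/
private lemma sir_comp_le (x a : ℝ → ℝ) (hx : Differentiable ℝ x) (ha : Continuous a)
    (h : ∀ t, 0 ≤ t → deriv x t ≤ a t * x t) :
    ∀ t, 0 ≤ t → x t ≤ x 0 * Real.exp (∫ s in (0:ℝ)..t, a s) := by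
  intro t ht
  set A : ℝ → ℝ := fun u => ∫ s in (0:ℝ)..u, a s with hA
  have hAd : ∀ u, HasDerivAt A (a u) u := fun u => sir_ftc ha u
  set y : ℝ → ℝ := fun u => x u * Real.exp (-(A u)) with hy
  have hyd : ∀ u, HasDerivAt y
      (deriv x u * Real.exp (-(A u)) + x u * (Real.exp (-(A u)) * -(a u))) u :=
    fun u => (hx u).hasDerivAt.mul ((hAd u).neg.exp)
  have hmono : AntitoneOn y (Set.Ici (0:ℝ)) := by
    apply antitoneOn_of_deriv_nonpos (convex_Ici 0)
      (fun u _ => ((hyd u).differentiableAt).continuousAt.continuousWithinAt)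
      (fun u _ => ((hyd u).differentiableAt).differentiableWithinAt)
    intro u hu
    rw [interior_Ici] at hu
    rw [(hyd u).deriv]
    have h1 := h u hu.le
    have h2 : (0:ℝ) < Real.exp (-(A u)) := Real.exp_pos _
    nlinarith
  have hy0 : y 0 = x 0 := by
    simp [hy, hA, intervalIntegral.integral_same]
  have hle : y t ≤ x 0 := by
    rw [← hy0]
    exact hmono (Set.self_mem_Ici) ht ht
  have hxt : x t = y t * Real.exp (A t) := by
    simp [hy, mul_assoc, ← Real.exp_add]
  rw [hxt]
  exact mul_le_mul_of_nonneg_right hle (Real.exp_pos _).le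

private lemma sir_comp_ge (x a : ℝ → ℝ) (hx : Differentiable ℝ x) (ha : Continuous a)
    (h : ∀ t, 0 ≤ t → a t * x t ≤ deriv x t) :
    ∀ t, 0 ≤ t → x 0 * Real.exp (∫ s in (0:ℝ)..t, a s) ≤ x t := by
  intro t ht
  have := sir_comp_le (fun u => - x u) a hx.neg ha (fun s hs => by
    show deriv (fun u => - x u) s ≤ a s * (- x s)
    rw [deriv.fun_neg]
    have := h s hs
    linarith) t ht
  change - x t ≤ - x 0 * Real.exp (∫ s in (0:ℝ)..t, a s) at this
  linarith

/-- If f(0) < k and there is no endemic equilibrium, then the disease-free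
equilibrium (0,0) is globally stable. -/
theorem sir_disease_free_globally_stable
    (k : ℝ) (hk : 1 < k)
    (f : ℝ → ℝ) (hf_pos : ∀ x, 0 < f x) (hf_smooth : ContDiff ℝ 1 f)
    (hf0 : f 0 < k)
    (hno_endemic : ¬ ∃ R₀ ∈ Set.Ioo (0 : ℝ) ((k - 1) / k),
      f R₀ = (k - 1) / ((k - 1) / k - R₀))
    (I R : ℝ → ℝ)
    (hI : Differentiable ℝ I) (hR : Differentiable ℝ R)
    (hIode : ∀ t, 0 ≤ t → deriv I t = I t * (f (R t) * (1 - I t - R t) - k))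
    (hRode : ∀ t, 0 ≤ t → deriv R t = (k - 1) * I t - R t)
    (hI0 : 0 ≤ I 0) (hR0 : 0 ≤ R 0) (hsum : I 0 + R 0 ≤ 1) :
    Filter.Tendsto (fun t => (I t, R t)) Filter.atTop (nhds (0, 0)) := by
  have hk0 : (0:ℝ) < k := lt_trans one_pos hk
  have hk1 : (0:ℝ) < k - 1 := by linarith
  set c : ℝ := (k - 1) / k with hc
  have hcpos : 0 < c := div_pos hk1 hk0
  have hkc : k * c = k - 1 := by rw [hc]; field_simp [hk0.ne']
  have hfc : Continuous f := hf_smooth.continuous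
  -- Step A: key inequality
  have hA : ∀ x : ℝ, 0 ≤ x → f x * (c - x) < k - 1 := by
    intro x hx
    rcases le_or_gt c x with h | h
    · nlinarith [hf_pos x]
    · by_contra hcon
      push_neg at hcon
      have hφc : ContinuousOn (fun y => f y * (c - y)) (Set.Icc 0 x) :=
        (hfc.mul (continuous_const.sub continuous_id)).continuousOn
      have h0 : f 0 * (c - 0) < k - 1 := by nlinarith [hf_pos 0]
      have hmem : (k - 1) ∈ Set.Icc (f 0 * (c - 0)) (f x * (c - x)) := ⟨h0.le, hcon⟩
      obtain ⟨x₀, hx₀m, hx₀⟩ := intermediate_value_Icc hx hφc hmem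
      have hx₀pos : 0 < x₀ := by
        rcases lt_or_eq_of_le hx₀m.1 with h1 | h1
        · exact h1
        · exfalso; rw [← h1] at hx₀; simp only at hx₀; linarith
      have hx₀c : x₀ < c := lt_of_le_of_lt hx₀m.2 h
      exact hno_endemic ⟨x₀, ⟨hx₀pos, hx₀c⟩, by
        rw [eq_div_iff (ne_of_gt (by linarith : (0:ℝ) < c - x₀))]
        exact hx₀⟩
  have hIcont : Continuous I := hI.continuous
  have hRcont : Continuous R := hR.continuous
  -- invariance: I ≥ 0
  have haI : Continuous (fun t => f (R t) * (1 - I t - R t) - k) :=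
    ((hfc.comp hRcont).mul ((continuous_const.sub hIcont).sub hRcont)).sub continuous_const
  have hInn : ∀ t, 0 ≤ t → 0 ≤ I t := by
    intro t ht
    have := sir_comp_ge I _ hI haI (fun s hs => by rw [hIode s hs]; ring_nf; exact le_rfl) t ht
    have h2 : 0 ≤ I 0 * Real.exp (∫ s in (0:ℝ)..t, (f (R s) * (1 - I s - R s) - k)) :=
      mul_nonneg hI0 (Real.exp_pos _).le
    linarith
  -- invariance: R ≥ 0
  have hRnn : ∀ t, 0 ≤ t → 0 ≤ R t := by
    intro t ht
    have := sir_comp_ge R (fun _ => (-1:ℝ)) hR continuous_const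
      (fun s hs => by
        rw [hRode s hs]
        show (-1:ℝ) * R s ≤ (k - 1) * I s - R s
        nlinarith [hInn s hs]) t ht
    have h2 : 0 ≤ R 0 * Real.exp (∫ s in (0:ℝ)..t, (-1:ℝ)) :=
      mul_nonneg hR0 (Real.exp_pos _).le
    linarith
  -- invariance: I + R ≤ 1
  have hsum1 : ∀ t, 0 ≤ t → I t + R t ≤ 1 := by
    intro t ht
    have key := sir_comp_le (fun u => I u + R u - 1) (fun u => -(1 + I u * f (R u)))
      ((hI.add hR).sub_const 1) (continuous_const.add (hIcont.mul (hfc.comp hRcont))).neg ?_ t ht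
    · have h2 : (I 0 + R 0 - 1) * Real.exp (∫ s in (0:ℝ)..t, -(1 + I s * f (R s))) ≤ 0 :=
        mul_nonpos_of_nonpos_of_nonneg (by linarith) (Real.exp_pos _).le
      change I t + R t - 1 ≤ (I 0 + R 0 - 1) * Real.exp _ at key
      linarith
    · intro s hs
      show deriv (fun u => I u + R u - 1) s ≤ -(1 + I s * f (R s)) * (I s + R s - 1)
      have hd : deriv (fun u => I u + R u - 1) s = deriv I s + deriv R s := by
        have : HasDerivAt (fun u => I u + R u - 1) (deriv I s + deriv R s) s :=
          ((hI s).hasDerivAt.add (hR s).hasDerivAt).sub_const 1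
        exact this.deriv
      rw [hd, hIode s hs, hRode s hs]
      have : -(1 + I s * f (R s)) * (I s + R s - 1)
          - (I s * (f (R s) * (1 - I s - R s) - k) + ((k - 1) * I s - R s)) = 1 := by ring
      linarith
  have hR1 : ∀ t, 0 ≤ t → R t ≤ 1 := fun t ht => by nlinarith [hsum1 t ht, hInn t ht]
  -- the Lyapunov rate function q
  set q : ℝ → ℝ := fun x => f x * (1 - x) - k - f x * x / (k - 1) with hqdef
  have hqc : Continuous q :=
    ((hfc.mul (continuous_const.sub continuous_id)).sub continuous_const).sub
      ((hfc.mul continuous_id).div_const _)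
  have hqneg : ∀ x : ℝ, 0 ≤ x → q x < 0 := by
    intro x hx
    have h1 := hA x hx
    have h2 : q x * (k - 1) = f x * ((k - 1) - k * x) - k * (k - 1) := by
      simp only [hqdef]
      field_simp
      ring
    have h3 : f x * ((k - 1) - k * x) = k * (f x * (c - x)) := by
      have : k * (f x * (c - x)) = f x * ((k * c) - k * x) := by ring
      rw [hkc] at this
      linarith
    nlinarith
  obtain ⟨m, hm01, hmmax⟩ := (isCompact_Icc (a := (0:ℝ)) (b := 1)).exists_isMaxOn
    (Set.nonempty_Icc.2 zero_le_one) hqc.continuousOn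
  set ε : ℝ := min (-(q m)) (1/2) with hε
  have hεpos : 0 < ε := lt_min (by linarith [hqneg m hm01.1]) (by norm_num)
  have hεle : ε ≤ 1/2 := min_le_right _ _
  have hqle : ∀ t, 0 ≤ t → q (R t) ≤ -ε := by
    intro t ht
    have h1 : q (R t) ≤ q m := hmmax (Set.mem_Icc.2 ⟨hRnn t ht, hR1 t ht⟩)
    have h2 : ε ≤ -(q m) := min_le_left _ _
    linarith
  -- Lyapunov function V
  set G : ℝ → ℝ := fun y => (k - 1)⁻¹ * ∫ s in (0:ℝ)..y, f s with hG
  have hGd : ∀ y, HasDerivAt G ((k - 1)⁻¹ * f y) y := fun y => (sir_ftc hfc y).const_mul _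
  have hGnn : ∀ y : ℝ, 0 ≤ y → 0 ≤ G y := fun y hy =>
    mul_nonneg (inv_nonneg.2 hk1.le)
      (intervalIntegral.integral_nonneg hy (fun s _ => (hf_pos s).le))
  set V : ℝ → ℝ := fun t => I t * Real.exp (G (R t)) with hV
  have hVd : ∀ t, HasDerivAt V
      (deriv I t * Real.exp (G (R t)) +
        I t * (Real.exp (G (R t)) * ((k - 1)⁻¹ * f (R t) * deriv R t))) t := by
    intro t
    have h1 : HasDerivAt (fun u => G (R u)) ((k - 1)⁻¹ * f (R t) * deriv R t) t :=
      (hGd (R t)).comp t (hR t).hasDerivAt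
    exact (hI t).hasDerivAt.mul h1.exp
  have hVdiff : Differentiable ℝ V := fun t => (hVd t).differentiableAt
  have hVode : ∀ t, 0 ≤ t → deriv V t = q (R t) * V t := by
    intro t ht
    rw [(hVd t).deriv, hIode t ht, hRode t ht]
    simp only [hqdef, hV]
    field_simp
    ring
  have hVnn : ∀ t, 0 ≤ t → 0 ≤ V t := fun t ht =>
    mul_nonneg (hInn t ht) (Real.exp_pos _).le
  have hVle : ∀ t, 0 ≤ t → V t ≤ V 0 * Real.exp (-ε * t) := by
    intro t ht
    have h1 := sir_comp_le V (fun _ => -ε) hVdiff continuous_const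
      (fun s hs => by
        rw [hVode s hs]
        exact mul_le_mul_of_nonneg_right (hqle s hs) (hVnn s hs)) t ht
    simpa [intervalIntegral.integral_const, mul_comm] using h1
  have hV0 : 0 ≤ V 0 := hVnn 0 le_rfl
  have hIle : ∀ t, 0 ≤ t → I t ≤ V 0 * Real.exp (-ε * t) := by
    intro t ht
    have h1 : I t ≤ V t :=
      le_mul_of_one_le_right (hInn t ht) (Real.one_le_exp (hGnn _ (hRnn t ht)))
    linarith [hVle t ht]
  -- decay of R
  have h1ε : 0 < 1 - ε := by linarith
  set Cr : ℝ := (k - 1) * V 0 / (1 - ε) with hCr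
  have hCrkey : Cr * (1 - ε) = (k - 1) * V 0 := by rw [hCr]; field_simp [h1ε.ne']
  set w : ℝ → ℝ := fun u => R u * Real.exp u - Cr * Real.exp ((1 - ε) * u) with hw
  have hwd : ∀ u, HasDerivAt w
      (deriv R u * Real.exp u + R u * Real.exp u
        - Cr * (Real.exp ((1 - ε) * u) * (1 - ε))) u := by
    intro u
    have hlin : HasDerivAt (fun v : ℝ => (1 - ε) * v) (1 - ε) u := by
      simpa using (hasDerivAt_id u).const_mul (1 - ε)
    exact ((hR u).hasDerivAt.mul (Real.hasDerivAt_exp u)).sub (hlin.exp.const_mul Cr)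
  have hwmono : AntitoneOn w (Set.Ici (0:ℝ)) := by
    apply antitoneOn_of_deriv_nonpos (convex_Ici 0)
      (fun u _ => ((hwd u).differentiableAt).continuousAt.continuousWithinAt)
      (fun u _ => ((hwd u).differentiableAt).differentiableWithinAt)
    intro u hu
    rw [interior_Ici] at hu
    rw [(hwd u).deriv, hRode u hu.le]
    have e1 : Real.exp (-ε * u) * Real.exp u = Real.exp ((1 - ε) * u) := by
      rw [← Real.exp_add]; ring_nf
    have h2 : (k - 1) * I u * Real.exp u ≤ (k - 1) * (V 0 * Real.exp (-ε * u)) * Real.exp u :=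
      mul_le_mul_of_nonneg_right
        (mul_le_mul_of_nonneg_left (hIle u hu.le) hk1.le) (Real.exp_pos u).le
    have h5 : Cr * (Real.exp ((1 - ε) * u) * (1 - ε))
        = (k - 1) * (V 0 * Real.exp (-ε * u)) * Real.exp u := by
      rw [show Cr * (Real.exp ((1 - ε) * u) * (1 - ε))
          = Cr * (1 - ε) * Real.exp ((1 - ε) * u) from by ring, hCrkey, ← e1]
      ring
    linarith [h2, h5]
  have hwle : ∀ t, 0 ≤ t → w t ≤ R 0 - Cr := by
    intro t ht
    have h1 := hwmono Set.self_mem_Ici ht ht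
    have h0 : w 0 = R 0 - Cr := by simp [hw]
    linarith [h1, h0.le, h0.ge]
  have hRle : ∀ t, 0 ≤ t → R t ≤ (R 0 - Cr) * Real.exp (-t) + Cr * Real.exp (-ε * t) := by
    intro t ht
    have h1 := hwle t ht
    have h2 : R t * Real.exp t ≤ (R 0 - Cr) + Cr * Real.exp ((1 - ε) * t) := by
      simp only [hw] at h1; linarith
    have e1 : Real.exp t * Real.exp (-t) = 1 := by rw [← Real.exp_add]; simp
    have e2 : Real.exp ((1 - ε) * t) * Real.exp (-t) = Real.exp (-ε * t) := by
      rw [← Real.exp_add]; ring_nf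
    have h3 : R t = R t * Real.exp t * Real.exp (-t) := by
      rw [mul_assoc, e1, mul_one]
    rw [h3]
    calc R t * Real.exp t * Real.exp (-t)
        ≤ ((R 0 - Cr) + Cr * Real.exp ((1 - ε) * t)) * Real.exp (-t) :=
          mul_le_mul_of_nonneg_right h2 (Real.exp_pos _).le
      _ = (R 0 - Cr) * Real.exp (-t) + Cr * Real.exp (-ε * t) := by
          rw [add_mul, mul_assoc, e2]
  -- limits
  have hexpneg : Tendsto (fun t : ℝ => Real.exp (-t)) atTop (nhds 0) :=
    Real.tendsto_exp_atBot.comp tendsto_neg_atTop_atBot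
  have hmulε : Tendsto (fun t : ℝ => -ε * t) atTop atBot := by
    have h1 : Tendsto (fun t : ℝ => ε * t) atTop atTop :=
      Tendsto.const_mul_atTop hεpos tendsto_id
    have h2 : Tendsto (fun t : ℝ => -(ε * t)) atTop atBot :=
      tendsto_neg_atTop_atBot.comp h1
    simpa [neg_mul] using h2
  have hexpε : Tendsto (fun t : ℝ => Real.exp (-ε * t)) atTop (nhds 0) :=
    Real.tendsto_exp_atBot.comp hmulε
  have hItend : Tendsto I atTop (nhds 0) := by
    have hub : Tendsto (fun t : ℝ => V 0 * Real.exp (-ε * t)) atTop (nhds 0) := by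
      simpa using hexpε.const_mul (V 0)
    refine tendsto_of_tendsto_of_tendsto_of_le_of_le' tendsto_const_nhds hub ?_ ?_
    · exact (eventually_ge_atTop (0:ℝ)).mono fun t ht => hInn t ht
    · exact (eventually_ge_atTop (0:ℝ)).mono fun t ht => hIle t ht
  have hRtend : Tendsto R atTop (nhds 0) := by
    have hub : Tendsto (fun t : ℝ => (R 0 - Cr) * Real.exp (-t) + Cr * Real.exp (-ε * t))
        atTop (nhds 0) := by
      have := (hexpneg.const_mul (R 0 - Cr)).add (hexpε.const_mul Cr)
      simpa using this
    refine tendsto_of_tendsto_of_tendsto_of_le_of_le' tendsto_const_nhds hub ?_ ?_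
    · exact (eventually_ge_atTop (0:ℝ)).mono fun t ht => hRnn t ht
    · exact (eventually_ge_atTop (0:ℝ)).mono fun t ht => hRle t ht
  exact hItend.prodMk_nhds hRtend
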